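/- Let F_θ(x) = (1/2)(1 - tanh(θ)·tanh(xθ/2)) for θ > 0. Then for all real x ≥ 3, 4·F_θ(2x) > 3·F_θ(x). -/
import Mathlib

lemma tanh_exp (y : ℝ) : Real.tanh y = (1 - Real.exp (-2*y)) / (1 + Real.exp (-2*y)) := by
  have h1 : Real.exp (-2*y) = Real.exp (-y) ^ 2 := by
    rw [sq, ← Real.exp_add]; ring_nf
  have h2 : Real.exp y * Real.exp (-y) = 1 := by
    rw [← Real.exp_add]; simp
  have hy : 0 < Real.exp y := Real.exp_pos y
  have hny : 0 < Real.exp (-y) := Real.exp_pos _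
  rw [Real.tanh_eq_sinh_div_cosh, Real.sinh_eq, Real.cosh_eq, h1]
  rw [div_eq_div_iff (by positivity) (by positivity)]
  nlinarith [h2]

lemma gpos (r : ℝ) (h0 : 0 < r) (h1 : r < 1) :
    0 < 1 - 3*r + 4*r^3 + 4*r^4 - 3*r^6 + r^7 := by
  nlinarith [sq_nonneg (r - 2/5), sq_nonneg (r^2 - 2/5*r), mul_pos h0 h0, sq_nonneg (1 - r), pow_pos h0 3, pow_pos h0 4, mul_pos (mul_pos h0 h0) h0, sq_nonneg (r^2 - 1/2), sq_nonneg (r*(1-r)), mul_pos (pow_pos h0 3) (sub_pos.mpr h1), sq_nonneg (r^3 - r^2), sq_nonneg (r^3 - r)]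

/-- `F_θ(x) = (1/2)(1 - tanh(θ)·tanh(xθ/2))`. -/
noncomputable def Ftheta (θ x : ℝ) : ℝ :=
  (1 / 2) * (1 - Real.tanh θ * Real.tanh (x * θ / 2))

theorem stmt_1 (θ : ℝ) (hθ : 0 < θ) (x : ℝ) (hx : 3 ≤ x) :
    4 * Ftheta θ (2 * x) > 3 * Ftheta θ x := by
  have hx0 : 0 < x := by linarith
  set r : ℝ := Real.exp (-(x*θ)/3) with hrdef
  set p : ℝ := Real.exp (-(2*θ)) with hpdef
  have hr0 : 0 < r := Real.exp_pos _
  have hr1 : r < 1 := by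
    rw [hrdef, Real.exp_lt_one_iff]
    have : 0 < x*θ := by positivity
    linarith
  have hp0 : 0 < p := Real.exp_pos _
  have hp1 : p < 1 := by
    rw [hpdef, Real.exp_lt_one_iff]; linarith
  have hpr : r^2 ≤ p := by
    rw [hrdef, hpdef, ← Real.exp_nat_mul]
    apply Real.exp_le_exp.mpr
    push_cast
    nlinarith
  have ht : Real.tanh θ = (1 - p)/(1 + p) := by
    rw [tanh_exp θ, hpdef]; ring_nf
  have hr3 : Real.exp (-(x*θ)) = r^3 := by
    rw [hrdef, ← Real.exp_nat_mul]
    push_cast; ring_nf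
  have hb : Real.tanh (x * θ / 2) = (1 - r^3)/(1 + r^3) := by
    rw [tanh_exp, ← hr3]; ring_nf
  have ha : Real.tanh (2 * x * θ / 2) = (1 - r^6)/(1 + r^6) := by
    rw [tanh_exp]
    have : Real.exp (-2 * (2 * x * θ / 2)) = r^6 := by
      rw [hrdef, ← Real.exp_nat_mul]; push_cast; ring_nf
    rw [this]
  have hd3 : (0:ℝ) < 1 + r^3 := by positivity
  have hd6 : (0:ℝ) < 1 + r^6 := by positivity
  have hdp : (0:ℝ) < 1 + p := by positivity
  rw [Ftheta, Ftheta, ht, ha, hb, gt_iff_lt, ← sub_pos]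
  have key : 0 < (1+p)*(1+r^3)*(1+r^6) - (1-p)*(1-r^3)*(1+8*r^3+r^6) := by
    have hg := gpos r hr0 hr1
    nlinarith [mul_nonneg (sub_nonneg.mpr hpr) (mul_pos hd3 hd6).le,
      mul_nonneg (sub_nonneg.mpr hpr) (mul_nonneg (sub_pos.mpr (show r^3 < 1 by nlinarith)).le (by positivity : (0:ℝ) ≤ 1+8*r^3+r^6)),
      mul_pos (mul_pos hr0 hr0) hg]
  have heq : 4 * (1 / 2 * (1 - (1 - p) / (1 + p) * ((1 - r ^ 6) / (1 + r ^ 6)))) -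
      3 * (1 / 2 * (1 - (1 - p) / (1 + p) * ((1 - r ^ 3) / (1 + r ^ 3)))) =
      ((1+p)*(1+r^3)*(1+r^6) - (1-p)*(1-r^3)*(1+8*r^3+r^6)) / (2*((1+p)*(1+r^3)*(1+r^6))) := by
    field_simp
    ring
  rw [heq]
  positivity
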